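/- Every non-nilpotent square matrix A over a field F is algebraically strong shift equivalent over F to a nonsingular (invertible) matrix. -/

import Mathlib

/-- Elementary strong shift equivalence. -/
def ElemSSE (R : Type*) [CommRing R]
    (A B : Σ n : ℕ, Matrix (Fin n) (Fin n) R) : Prop :=
  ∃ (U : Matrix (Fin A.1) (Fin B.1) R) (V : Matrix (Fin B.1) (Fin A.1) R),
    A.2 = U * V ∧ B.2 = V * U

/-- Algebraic strong shift equivalence of lag `l`. -/
def AlgSSE (R : Type*) [CommRing R] (l : ℕ)
    (A B : Σ n : ℕ, Matrix (Fin n) (Fin n) R) : Prop :=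
  ∃ f : ℕ → Σ n : ℕ, Matrix (Fin n) (Fin n) R,
    f 0 = A ∧ f l = B ∧ ∀ i < l, ElemSSE R (f i) (f (i + 1))

lemma algSSE_cons {R : Type*} [CommRing R] {l : ℕ}
    {A B C : Σ n : ℕ, Matrix (Fin n) (Fin n) R}
    (h1 : ElemSSE R A B) (h2 : AlgSSE R l B C) : AlgSSE R (l + 1) A C := by
  obtain ⟨f, hf0, hfl, hstep⟩ := h2
  refine ⟨fun i => match i with | 0 => A | (i + 1) => f i, rfl, hfl, ?_⟩
  intro i hi
  match i with
  | 0 => simpa [hf0] using h1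
  | (i + 1) => exact hstep i (by omega)

lemma pow_mul_comm_aux {R : Type*} [CommRing R] {m p : ℕ}
    (U : Matrix (Fin m) (Fin p) R) (V : Matrix (Fin p) (Fin m) R) (k : ℕ) :
    (U * V) ^ (k + 1) = U * (V * U) ^ k * V := by
  induction k with
  | zero => simp
  | succ k ih =>
    rw [pow_succ, ih, pow_succ]
    simp only [Matrix.mul_assoc]

/-- every non-nilpotent square matrix over a field is
algebraically strong shift equivalent to a nonsingular matrix. -/
theorem stmt_9 (F : Type*) [Field F] (n : ℕ)
    (A : Matrix (Fin n) (Fin n) F) (hA : ¬ IsNilpotent A) :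
    ∃ (l p : ℕ) (B : Matrix (Fin p) (Fin p) F),
      B.det ≠ 0 ∧ AlgSSE F l ⟨n, A⟩ ⟨p, B⟩ := by
  induction n using Nat.strong_induction_on with
  | _ n IH =>
    by_cases hdet : A.det ≠ 0
    · exact ⟨0, n, A, hdet, fun _ => ⟨n, A⟩, rfl, rfl, fun i hi => absurd hi (by omega)⟩
    · push_neg at hdet
      set ℓ : (Fin n → F) →ₗ[F] (Fin n → F) := Matrix.toLin' A with hℓ
      set r : ℕ := Module.finrank F (LinearMap.range ℓ) with hrdef
      have hrle : r ≤ n := by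
        simpa using (Submodule.finrank_le (LinearMap.range ℓ))
      have hr : r < n := by
        rcases lt_or_eq_of_le hrle with h | h
        · exact h
        · exfalso
          have htop : LinearMap.range ℓ = ⊤ := by
            apply Submodule.eq_top_of_finrank_eq
            simpa using h
          have hsurj : Function.Surjective ℓ := LinearMap.range_eq_top.mp htop
          have : Function.Surjective (A.mulVec ·) := by
            intro y; obtain ⟨x, hx⟩ := hsurj y; exact ⟨x, hx⟩
          have := Matrix.mulVec_surjective_iff_isUnit.mp this
          exact ((Matrix.isUnit_iff_isUnit_det A).mp this).ne_zero hdet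
      let b : Module.Basis (Fin r) F (LinearMap.range ℓ) := Module.finBasis F (LinearMap.range ℓ)
      let U : Matrix (Fin n) (Fin r) F :=
        LinearMap.toMatrix b (Pi.basisFun F (Fin n)) (LinearMap.range ℓ).subtype
      let V : Matrix (Fin r) (Fin n) F :=
        LinearMap.toMatrix (Pi.basisFun F (Fin n)) b ℓ.rangeRestrict
      have hUV : A = U * V := by
        have hcomp : ((LinearMap.range ℓ).subtype).comp ℓ.rangeRestrict = ℓ := rfl
        have := LinearMap.toMatrix_comp (Pi.basisFun F (Fin n)) b (Pi.basisFun F (Fin n))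
          (LinearMap.range ℓ).subtype ℓ.rangeRestrict
        rw [hcomp] at this
        rw [LinearMap.toMatrix_eq_toMatrix'] at this
        have h2 : LinearMap.toMatrix' ℓ = A := LinearMap.toMatrix'_toLin' A
        rw [h2] at this
        exact this
      set B : Matrix (Fin r) (Fin r) F := V * U with hB
      have hBnil : ¬ IsNilpotent B := by
        rintro ⟨k, hk⟩
        apply hA
        refine ⟨k + 1, ?_⟩
        rw [hUV, pow_mul_comm_aux, ← hB, hk]
        simp
      obtain ⟨l, p, C, hC, hsse⟩ := IH r hr B hBnil
      exact ⟨l + 1, p, C, hC, algSSE_cons ⟨U, V, hUV, rfl⟩ hsse⟩
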